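/- Let n ≥ 3 be an integer, H a real constant, and let (x, y, θ) be a Delaunay generating curve on [t_p, t_q] (t_p < t_q) with constant force F > 0. Assume the curve is strictly rising, i.e. sin θ(t) > 0 for all t ∈ (t_p, t_q); that θ(t) ∈ [θ(t_p), θ(t_q)] for all t; that θ(t_p) ∈ [0, π/2); and that max{π/6, θ(t_p)} < θ(t_q) ≤ min{π/2, θ(t_p) + π/3}. Then x(t_q) − y(t_q)·cot(θ(t_q) − π/6) < x(t_p) − y(t_p)·cot(θ(t_p) + π/6); i.e., the x-axis intercept of the line through the right endpoint q = (x(t_q), y(t_q)) at angle θ(t_q) − π/6 above the horizontal lies strictly to the left of the x-axis intercept of the line through the left endpoint p = (x(t_p), y(t_p)) at angle θ(t_p) + π/6 above the horizontal. -/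

import Mathlib

open Real Set

lemma cot_le_cot_aux {u v : ℝ} (hu : 0 < u) (hv : v < π) (huv : u ≤ v) :
    Real.cot v ≤ Real.cot u := by
  have hsu : 0 < Real.sin u := Real.sin_pos_of_pos_of_lt_pi hu (lt_of_le_of_lt huv hv)
  have hsv : 0 < Real.sin v := Real.sin_pos_of_pos_of_lt_pi (lt_of_lt_of_le hu huv) hv
  have hs : 0 ≤ Real.sin (v - u) :=
    Real.sin_nonneg_of_nonneg_of_le_pi (by linarith) (by linarith)
  rw [Real.sin_sub] at hs
  rw [Real.cot_eq_cos_div_sin, Real.cot_eq_cos_div_sin, div_le_div_iff₀ hsv hsu]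
  nlinarith

lemma strictConvexOn_chord {f : ℝ → ℝ} (hf : StrictConvexOn ℝ (Ioi (0:ℝ)) f)
    {a b u : ℝ} (ha : 0 < a) (hau : a < u) (hub : u < b) :
    f u < f a + (f b - f a) * (u - a) / (b - a) := by
  have hab : a < b := hau.trans hub
  have hba : (0:ℝ) < b - a := by linarith
  set r : ℝ := (u - a) / (b - a) with hr
  have hr0 : 0 < r := div_pos (by linarith) hba
  have hr1 : r < 1 := (div_lt_one hba).2 (by linarith)
  have hcomb : (1 - r) • a + r • b = u := by
    simp only [smul_eq_mul, hr]
    field_simp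
    ring
  have h2 := hf.2 (mem_Ioi.2 ha) (mem_Ioi.2 (ha.trans hab)) hab.ne
    (by linarith : (0:ℝ) < 1 - r) hr0 (by ring)
  rw [hcomb] at h2
  simp only [smul_eq_mul] at h2
  calc f u < (1 - r) * f a + r * f b := h2
    _ = f a + (f b - f a) * (u - a) / (b - a) := by rw [hr]; field_simp; ring

lemma phi_hasDerivAt {x y : ℝ → ℝ} {c s aa t ct st : ℝ} (hs : s ≠ 0)
    (hxd : HasDerivAt x ct t) (hyd : HasDerivAt y st t)
    (hw : 0 < 1 - (c + s * (y t - aa))^2) :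
    HasDerivAt (fun u => x u + Real.sqrt (1 - (c + s * (y u - aa))^2) / s)
      (ct - (c + s * (y t - aa)) * st / Real.sqrt (1 - (c + s * (y t - aa))^2)) t := by
  have hq : (0:ℝ) < Real.sqrt (1 - (c + s * (y t - aa))^2) := Real.sqrt_pos.2 hw
  have hud : HasDerivAt (fun u => c + s * (y u - aa)) (s * st) t :=
    ((hyd.sub_const aa).const_mul s).const_add c
  have hv : HasDerivAt (fun u => 1 - (c + s * (y u - aa))^2)
      (-((2:ℕ) * (c + s * (y t - aa)) ^ (2-1) * (s * st))) t := (hud.pow 2).const_sub 1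
  have hvsqrt := hv.sqrt hw.ne'
  have hfull := hxd.add (hvsqrt.div_const s)
  refine hfull.congr_deriv ?_
  have hL : ∃ L : ℝ, c + s * (y t - aa) = L := ⟨_, rfl⟩
  obtain ⟨L, hLeq⟩ := hL
  rw [hLeq]
  have hq' : (0:ℝ) < Real.sqrt (1 - L^2) := by rw [← hLeq]; exact hq
  have hL2 : ∃ q : ℝ, Real.sqrt (1 - L^2) = q := ⟨_, rfl⟩
  obtain ⟨q, hqeq⟩ := hL2
  rw [hqeq] at hq' ⊢
  norm_num
  field_simp
  ring

set_option maxHeartbeats 1000000 in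
theorem unduloid_corollary
    (n : ℕ) (hn : 3 ≤ n) (H F : ℝ) (tp tq : ℝ) (htpq : tp < tq)
    (x y θ : ℝ → ℝ)
    (hypos : ∀ t ∈ Set.Icc tp tq, 0 < y t)
    (hx : ∀ t ∈ Set.Icc tp tq,
      HasDerivWithinAt x (Real.cos (θ t)) (Set.Icc tp tq) t)
    (hy : ∀ t ∈ Set.Icc tp tq,
      HasDerivWithinAt y (Real.sin (θ t)) (Set.Icc tp tq) t)
    (hθ : ∀ t ∈ Set.Icc tp tq, HasDerivWithinAt θ
      (-((n : ℝ) - 1) * H + ((n : ℝ) - 2) * Real.cos (θ t) / y t)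
      (Set.Icc tp tq) t)
    (hF : ∀ t ∈ Set.Icc tp tq,
      y t ^ (n - 2) * (Real.cos (θ t) - H * y t) = F)
    (hFpos : 0 < F)
    (hrising : ∀ t ∈ Set.Ioo tp tq, 0 < Real.sin (θ t))
    (hrange : ∀ t ∈ Set.Icc tp tq, θ t ∈ Set.Icc (θ tp) (θ tq))
    (hθp : θ tp ∈ Set.Ico 0 (π / 2))
    (hθq1 : max (π / 6) (θ tp) < θ tq)
    (hθq2 : θ tq ≤ min (π / 2) (θ tp + π / 3)) :
    x tq - y tq * Real.cot (θ tq - π / 6)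
      < x tp - y tp * Real.cot (θ tp + π / 6) := by
  have hπ : (0:ℝ) < π := Real.pi_pos
  have hπ3 : (3:ℝ) < π := Real.pi_gt_three
  obtain ⟨hθp0, hθplt⟩ := hθp
  have hθqgt : π/6 < θ tq := (le_max_left _ _).trans_lt hθq1
  have hθpq : θ tp < θ tq := (le_max_right _ _).trans_lt hθq1
  have hθqle : θ tq ≤ π/2 := hθq2.trans (min_le_left _ _)
  have hθqle' : θ tq ≤ θ tp + π/3 := hθq2.trans (min_le_right _ _)
  have htp : tp ∈ Icc tp tq := ⟨le_refl _, htpq.le⟩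
  have htq : tq ∈ Icc tp tq := ⟨htpq.le, le_refl _⟩
  have hxc : ContinuousOn x (Icc tp tq) := fun t ht => (hx t ht).continuousWithinAt
  have hyc : ContinuousOn y (Icc tp tq) := fun t ht => (hy t ht).continuousWithinAt
  -- y strictly increasing
  have hymono : StrictMonoOn y (Icc tp tq) := by
    apply strictMonoOn_of_deriv_pos (convex_Icc tp tq) hyc
    intro t ht
    rw [interior_Icc] at ht
    have h1 : HasDerivAt y (Real.sin (θ t)) t :=
      (hy t (Ioo_subset_Icc_self ht)).hasDerivAt (Icc_mem_nhds ht.1 ht.2)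
    rw [h1.deriv]; exact hrising t ht
  set k := n - 2 with hk_def
  have hk1 : 1 ≤ k := by omega
  set a := y tp with ha_def
  set b := y tq with hb_def
  have ha : 0 < a := hypos tp htp
  have hb : 0 < b := hypos tq htq
  have hab : a < b := hymono htp htq htpq
  have hba : (0:ℝ) < b - a := by linarith
  -- force identity
  have hforce : ∀ t ∈ Icc tp tq, Real.cos (θ t) = H * y t + F * (y t ^ k)⁻¹ := by
    intro t ht
    have h0 : (0:ℝ) < y t ^ k := pow_pos (hypos t ht) _
    have h2 : Real.cos (θ t) - H * y t = F * (y t ^ k)⁻¹ := by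
      rw [← div_eq_mul_inv, eq_div_iff h0.ne', mul_comm]
      exact hF t ht
    linarith
  set cp := Real.cos (θ tp) with hcp_def
  set cq := Real.cos (θ tq) with hcq_def
  set s := (cq - cp) / (b - a) with hs_def
  have hcpv : cp = H * a + F * (a ^ k)⁻¹ := hforce tp htp
  have hcqv : cq = H * b + F * (b ^ k)⁻¹ := hforce tq htq
  clear_value k a b
  have hcp1 : cp ≤ 1 := Real.cos_le_one _
  have hcq0 : 0 ≤ cq := Real.cos_nonneg_of_mem_Icc ⟨by linarith, hθqle⟩
  have hcqcp : cq < cp :=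
    Real.cos_lt_cos_of_nonneg_of_le_pi hθp0 (by linarith) hθpq
  have hs_neg : s < 0 := div_neg_of_neg_of_pos (by linarith) hba
  have hsba : s * (b - a) = cq - cp := div_mul_cancel₀ _ hba.ne'
  clear_value cp cq s
  -- convexity
  have hconv : StrictConvexOn ℝ (Ioi (0:ℝ)) (fun u : ℝ => u ^ (-(k:ℤ))) :=
    strictConvexOn_zpow (by omega) (by omega)
  -- chord bound on cos θ t
  have hchord : ∀ t ∈ Ioo tp tq, Real.cos (θ t) < cp + s * (y t - a) := by
    intro t ht
    have htmem : t ∈ Icc tp tq := Ioo_subset_Icc_self ht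
    have hyt1 : a < y t := by rw [ha_def]; exact hymono htp htmem ht.1
    have hyt2 : y t < b := by rw [hb_def]; exact hymono htmem htq ht.2
    have hpc := strictConvexOn_chord hconv ha hyt1 hyt2
    simp only [zpow_neg, zpow_natCast] at hpc
    have hmul : F * ((y t) ^ k)⁻¹ <
        F * ((a ^ k)⁻¹ + ((b ^ k)⁻¹ - (a ^ k)⁻¹) * (y t - a) / (b - a)) :=
      mul_lt_mul_of_pos_left hpc hFpos
    have hLval : cp + s * (y t - a) =
        H * y t + F * ((a ^ k)⁻¹ + ((b ^ k)⁻¹ - (a ^ k)⁻¹) * (y t - a) / (b - a)) := by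
      rw [hs_def, hcpv, hcqv]
      field_simp
      ring
    rw [hLval]
    have := hforce t htmem
    linarith
  -- bounds on the chord value in the interior
  have hLbounds : ∀ t ∈ Ioo tp tq, 0 < cp + s * (y t - a) ∧ cp + s * (y t - a) < 1 := by
    intro t ht
    have htmem : t ∈ Icc tp tq := Ioo_subset_Icc_self ht
    have hyt1 : a < y t := by rw [ha_def]; exact hymono htp htmem ht.1
    have hyt2 : y t < b := by rw [hb_def]; exact hymono htmem htq ht.2
    have hneg : s * (y t - a) < 0 := mul_neg_of_neg_of_pos hs_neg (by linarith)
    have hgt : s * (b - a) < s * (y t - a) :=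
      mul_lt_mul_of_neg_left (by linarith : y t - a < b - a) hs_neg
    constructor
    · linarith [hsba]
    · linarith
  -- the auxiliary strictly decreasing function Φ
  set Φ : ℝ → ℝ := fun t => x t + Real.sqrt (1 - (cp + s * (y t - a))^2) / s with hΦ_def
  have hΦc : ContinuousOn Φ (Icc tp tq) := by
    apply hxc.add
    apply ContinuousOn.div_const
    exact Real.continuous_sqrt.comp_continuousOn
      (continuousOn_const.sub
        (((continuousOn_const.add (continuousOn_const.mul (hyc.sub continuousOn_const)))).pow 2))
  have hΦd : ∀ t ∈ Ioo tp tq, HasDerivAt Φ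
      (Real.cos (θ t) - (cp + s * (y t - a)) * Real.sin (θ t) /
        Real.sqrt (1 - (cp + s * (y t - a))^2)) t := by
    intro t ht
    have htmem : t ∈ Icc tp tq := Ioo_subset_Icc_self ht
    have hnb : Icc tp tq ∈ nhds t := Icc_mem_nhds ht.1 ht.2
    have hxd : HasDerivAt x (Real.cos (θ t)) t := (hx t htmem).hasDerivAt hnb
    have hyd : HasDerivAt y (Real.sin (θ t)) t := (hy t htmem).hasDerivAt hnb
    obtain ⟨hL0, hL1⟩ := hLbounds t ht
    exact phi_hasDerivAt hs_neg.ne hxd hyd (by nlinarith)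
  have hΦanti : StrictAntiOn Φ (Icc tp tq) := by
    apply strictAntiOn_of_deriv_neg (convex_Icc tp tq) hΦc
    intro t ht
    rw [interior_Icc] at ht
    rw [(hΦd t ht).deriv]
    have htmem : t ∈ Icc tp tq := Ioo_subset_Icc_self ht
    obtain ⟨hL0, hL1⟩ := hLbounds t ht
    have hcL : Real.cos (θ t) < cp + s * (y t - a) := hchord t ht
    set L := cp + s * (y t - a) with hL_def
    clear_value L
    have hw : (0:ℝ) < 1 - L^2 := by nlinarith
    have hq : (0:ℝ) < Real.sqrt (1 - L^2) := Real.sqrt_pos.2 hw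
    have hq2 : (Real.sqrt (1 - L^2))^2 = 1 - L^2 := Real.sq_sqrt hw.le
    have hsin : 0 < Real.sin (θ t) := hrising t ht
    have hcos0 : 0 ≤ Real.cos (θ t) := by
      apply Real.cos_nonneg_of_mem_Icc
      constructor
      · have := (hrange t htmem).1; linarith
      · have := (hrange t htmem).2; linarith
    have hpyth := Real.sin_sq_add_cos_sq (θ t)
    rw [sub_neg]
    rw [lt_div_iff₀ hq]
    have hsq_lt : (Real.cos (θ t) * Real.sqrt (1 - L^2))^2 < (L * Real.sin (θ t))^2 := by
      have e1 : (Real.cos (θ t) * Real.sqrt (1 - L^2))^2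
          = Real.cos (θ t)^2 * (1 - L^2) := by rw [mul_pow, hq2]
      have e2 : (L * Real.sin (θ t))^2 = L^2 * (1 - Real.cos (θ t)^2) := by
        rw [mul_pow]; nlinarith [hpyth]
      rw [e1, e2]
      nlinarith [mul_pos (sub_pos.2 hcL) (add_pos_of_nonneg_of_pos hcos0 hL0)]
    have hlsin : 0 ≤ L * Real.sin (θ t) := by positivity
    exact lt_of_pow_lt_pow_left₀ 2 hlsin hsq_lt
  -- endpoint values of Φ
  have hAB := hΦanti htp htq htpq
  have hΦp : Φ tp = x tp + Real.sin (θ tp) / s := by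
    rw [hΦ_def]
    simp only [← ha_def, sub_self, mul_zero, add_zero]
    rw [hcp_def, ← Real.sin_eq_sqrt_one_sub_cos_sq hθp0 (by linarith)]
  have hΦq : Φ tq = x tq + Real.sin (θ tq) / s := by
    rw [hΦ_def]
    simp only [← hb_def]
    have e : cp + s * (b - a) = cq := by rw [hsba]; ring
    rw [e, hcq_def, ← Real.sin_eq_sqrt_one_sub_cos_sq (by linarith) (by linarith)]
  rw [hΦp, hΦq] at hAB
  -- x tq - x tp < (b - a) * cot M where M = (θp + θq)/2
  have hM0 : 0 < (θ tp + θ tq) / 2 := by linarith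
  have hMpi2 : (θ tp + θ tq) / 2 ≤ π/2 := by linarith
  have hD0 : 0 < (θ tq - θ tp) / 2 := by linarith
  have hD6 : (θ tq - θ tp) / 2 ≤ π/6 := by linarith
  have hsinM : 0 < Real.sin ((θ tp + θ tq) / 2) :=
    Real.sin_pos_of_pos_of_lt_pi hM0 (by linarith)
  have hsinD : 0 < Real.sin ((θ tq - θ tp) / 2) :=
    Real.sin_pos_of_pos_of_lt_pi hD0 (by linarith)
  have h1 : Real.sin (θ tp) - Real.sin (θ tq)
      = -(2 * Real.sin ((θ tq - θ tp) / 2) * Real.cos ((θ tp + θ tq) / 2)) := by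
    rw [Real.sin_sub_sin]
    have e1 : (θ tp - θ tq) / 2 = -((θ tq - θ tp) / 2) := by ring
    rw [e1, Real.sin_neg]; ring
  have h2 : cq - cp = -(2 * Real.sin ((θ tp + θ tq) / 2) * Real.sin ((θ tq - θ tp) / 2)) := by
    rw [hcq_def, hcp_def, Real.cos_sub_cos]
    have e2 : (θ tq + θ tp) / 2 = (θ tp + θ tq) / 2 := by ring
    rw [e2]; ring
  have hC : (Real.sin (θ tp) - Real.sin (θ tq)) / s
      = (b - a) * (Real.cos ((θ tp + θ tq) / 2) / Real.sin ((θ tp + θ tq) / 2)) := by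
    rw [hs_def, h1, h2]
    have hden : (-(2 * Real.sin ((θ tp + θ tq) / 2) * Real.sin ((θ tq - θ tp) / 2))) ≠ 0 :=
      ne_of_lt (by nlinarith [mul_pos hsinM hsinD])
    rw [div_div_eq_mul_div, div_eq_iff hden]
    field_simp
  have hB : x tq - x tp
      < (b - a) * (Real.cos ((θ tp + θ tq) / 2) / Real.sin ((θ tp + θ tq) / 2)) := by
    rw [← hC]
    have e : Real.sin (θ tp) / s - Real.sin (θ tq) / s
        = (Real.sin (θ tp) - Real.sin (θ tq)) / s := by ring
    linarith [hAB, e]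
  -- cot comparisons
  have hcotM : Real.cot ((θ tp + θ tq) / 2)
      = Real.cos ((θ tp + θ tq) / 2) / Real.sin ((θ tp + θ tq) / 2) :=
    Real.cot_eq_cos_div_sin _
  have hαM : Real.cot ((θ tp + θ tq) / 2) ≤ Real.cot (θ tq - π/6) :=
    cot_le_cot_aux (by linarith) (by linarith) (by linarith)
  have hMβ : Real.cot (θ tp + π/6) ≤ Real.cot ((θ tp + θ tq) / 2) :=
    cot_le_cot_aux hM0 (by linarith) (by linarith)
  have hfin1 : b * Real.cot ((θ tp + θ tq) / 2) ≤ b * Real.cot (θ tq - π/6) :=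
    mul_le_mul_of_nonneg_left hαM hb.le
  have hfin2 : a * Real.cot (θ tp + π/6) ≤ a * Real.cot ((θ tp + θ tq) / 2) :=
    mul_le_mul_of_nonneg_left hMβ ha.le
  rw [hcotM] at hfin1 hfin2
  linarith
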